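/- Let p ≥ 3 be prime, k ≥ 1, ε ∈ {1,−1}, and m an integer with m ≡ ε (mod p^{⌈k/2⌉}). Then the number of integers x with 1 ≤ x ≤ p^k and (x−m)(xm−1) ≡ 0 (mod p^k) equals p^{⌊k/2⌋}. -/

import Mathlib

-- Auxiliary lemma: if p^k divides a*b (a,b nonzero), then p^⌈k/2⌉ divides a or b.
lemma half_dvd (p : ℕ) (hp : p.Prime) (k : ℕ) (a b : ℤ)
    (ha : a ≠ 0) (hb : b ≠ 0) (h : (p : ℤ) ^ k ∣ a * b) :
    (p : ℤ) ^ ((k + 1) / 2) ∣ a ∨ (p : ℤ) ^ ((k + 1) / 2) ∣ b := by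
  have ha' : a.natAbs ≠ 0 := by simpa using ha
  have hb' : b.natAbs ≠ 0 := by simpa using hb
  have h' : p ^ k ∣ a.natAbs * b.natAbs := by
    have := Int.natAbs_dvd_natAbs.mpr h
    simpa [Int.natAbs_mul, Int.natAbs_pow] using this
  have hk : k ≤ (a.natAbs * b.natAbs).factorization p :=
    (Nat.Prime.pow_dvd_iff_le_factorization hp (Nat.mul_ne_zero ha' hb')).mp h'
  rw [Nat.factorization_mul ha' hb'] at hk
  simp only [Finsupp.add_apply] at hk
  have : (k + 1) / 2 ≤ a.natAbs.factorization p ∨ (k + 1) / 2 ≤ b.natAbs.factorization p := by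
    omega
  rcases this with h1 | h1
  · left
    have := (Nat.Prime.pow_dvd_iff_le_factorization hp ha').mpr h1
    have h2 : ((p : ℤ)) ^ ((k + 1) / 2) ∣ (a.natAbs : ℤ) := by exact_mod_cast this
    exact h2.trans (Int.natAbs_dvd.mpr dvd_rfl)
  · right
    have := (Nat.Prime.pow_dvd_iff_le_factorization hp hb').mpr h1
    have h2 : ((p : ℤ)) ^ ((k + 1) / 2) ∣ (b.natAbs : ℤ) := by exact_mod_cast this
    exact h2.trans (Int.natAbs_dvd.mpr dvd_rfl)

-- Counting integers in [1, d*M] congruent to r mod d.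
lemma count_cong (d M r : ℤ) (hd : 0 < d) (hM : 0 ≤ M) :
    ((Finset.Icc 1 (d * M)).filter (fun x => d ∣ x - r)).card = M.toNat := by
  set rep : ℤ := (r - 1) % d + 1 with hrepdef
  have hrep1 : 1 ≤ rep := by
    have := Int.emod_nonneg (r - 1) hd.ne'
    omega
  have hrep2 : rep ≤ d := by
    have := Int.emod_lt_of_pos (r - 1) hd
    omega
  have hrrep : d ∣ r - rep := by
    have : r - rep = (r - 1) - (r - 1) % d := by ring
    rw [this, Int.emod_def]
    exact ⟨(r - 1) / d, by ring⟩
  have hcard : ((Finset.Icc 1 (d * M)).filter (fun x => d ∣ x - r)).card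
      = (Finset.Icc (0 : ℤ) (M - 1)).card := by
    apply Finset.card_bij' (fun x _ => (x - rep) / d) (fun y _ => rep + d * y)
    · intro x hx
      simp only [Finset.mem_filter, Finset.mem_Icc] at hx
      obtain ⟨⟨hx1, hx2⟩, hxd⟩ := hx
      have hdvd : d ∣ x - rep := by
        have : x - rep = (x - r) + (r - rep) := by ring
        rw [this]; exact dvd_add hxd hrrep
      obtain ⟨s, hs⟩ := hdvd
      have hs0 : 0 ≤ s := by
        by_contra hneg
        push_neg at hneg
        have : d * s ≤ d * (-1) := by
          apply mul_le_mul_of_nonneg_left (by omega) hd.le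
        omega
      have hsM : s ≤ M - 1 := by
        by_contra hbig
        push_neg at hbig
        have : d * M ≤ d * s := by
          apply mul_le_mul_of_nonneg_left (by omega) hd.le
        omega
      have : (x - rep) / d = s := by
        rw [hs, Int.mul_ediv_cancel_left _ hd.ne']
      rw [this]
      simp only [Finset.mem_Icc]
      exact ⟨hs0, hsM⟩
    · intro y hy
      simp only [Finset.mem_Icc] at hy
      simp only [Finset.mem_filter, Finset.mem_Icc]
      refine ⟨⟨by nlinarith, by nlinarith⟩, ?_⟩
      have : rep + d * y - r = d * y - (r - rep) := by ring
      rw [this]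
      exact dvd_sub (Dvd.intro _ rfl) hrrep
    · intro x hx
      simp only [Finset.mem_filter, Finset.mem_Icc] at hx
      have hdvd : d ∣ x - rep := by
        have : x - rep = (x - r) + (r - rep) := by ring
        rw [this]; exact dvd_add hx.2 hrrep
      rw [Int.mul_ediv_cancel' hdvd]
      ring
    · intro y _
      show (rep + d * y - rep) / d = y
      rw [add_sub_cancel_left, Int.mul_ediv_cancel_left _ hd.ne']
  rw [hcard, Int.card_Icc]
  congr 1
  omega

theorem stmt3 (p : ℕ) (hp : p.Prime) (hp3 : 3 ≤ p) (k : ℕ) (hk : 1 ≤ k)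
    (ε : ℤ) (hε : ε = 1 ∨ ε = -1) (m : ℤ)
    (hm : m ≡ ε [ZMOD ((p : ℤ) ^ ((k + 1) / 2))]) :
    ((Finset.Icc 1 ((p : ℤ) ^ k)).filter
      (fun x => ((p : ℤ) ^ k) ∣ (x - m) * (x * m - 1))).card = p ^ (k / 2) := by
  set c : ℕ := (k + 1) / 2 with hc
  set f : ℕ := k / 2 with hf
  have hcf : c + f = k := by omega
  have h2c : k ≤ 2 * c := by omega
  set d : ℤ := (p : ℤ) ^ c with hd
  have hdpos : 0 < d := by positivity
  have hε2 : ε * ε = 1 := by rcases hε with rfl | rfl <;> norm_num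
  have hmε : d ∣ m - ε := Int.ModEq.dvd hm.symm
  have hset : (Finset.Icc 1 ((p : ℤ) ^ k)).filter
      (fun x => ((p : ℤ) ^ k) ∣ (x - m) * (x * m - 1))
      = (Finset.Icc 1 ((p : ℤ) ^ k)).filter (fun x => d ∣ x - ε) := by
    apply Finset.filter_congr
    intro x _
    constructor
    · intro h
      by_cases hA : x - m = 0
      · have : x = m := by omega
        rw [this]; exact hmε
      by_cases hB : x * m - 1 = 0
      · have hxm : x * m = 1 := by omega
        have hmx : m = x := by
          rcases Int.isUnit_iff.mp (IsUnit.of_mul_eq_one (a := x) m hxm) with rfl | rfl <;> omega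
        rw [← hmx]; exact hmε
      · rcases half_dvd p hp k _ _ hA hB h with h1 | h1
        · have : x - ε = (x - m) + (m - ε) := by ring
          rw [this]; exact dvd_add h1 hmε
        · have h2 : d ∣ ε * (x - ε) := by
            have : ε * (x - ε) = (x * m - 1) - x * (m - ε) := by
              have : ε * ε = 1 := hε2
              nlinarith [hε2]
            rw [this]
            exact dvd_sub h1 (Dvd.dvd.mul_left hmε x)
          have : x - ε = ε * (ε * (x - ε)) := by
            rw [← mul_assoc, hε2, one_mul]
          rw [this]
          exact Dvd.dvd.mul_left h2 ε
    · intro h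
      obtain ⟨s, hs⟩ := h
      obtain ⟨t, ht⟩ := hmε
      have hx : x = ε + d * s := by omega
      have hmm : m = ε + d * t := by omega
      have hprod : (x - m) * (x * m - 1)
          = (d * d) * ((s - t) * (ε * (s + t) + d * s * t)) := by
        rw [hx, hmm]; linear_combination (d * (s - t)) * hε2
      rw [hprod]
      apply Dvd.dvd.mul_right
      have : (p : ℤ) ^ k ∣ (p : ℤ) ^ (2 * c) := pow_dvd_pow _ h2c
      have h2 : (p : ℤ) ^ (2 * c) = d * d := by
        rw [hd, ← pow_add]; ring_nf
      rwa [h2] at this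
  rw [hset]
  have hpk : (p : ℤ) ^ k = d * (p : ℤ) ^ f := by
    rw [hd, ← pow_add, hcf]
  rw [hpk]
  rw [count_cong d ((p : ℤ) ^ f) ε hdpos (by positivity)]
  rw [← Nat.cast_pow, Int.toNat_natCast]
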